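/- Let u be a Neumann eigenfunction of the Laplacian on the unit disc D ⊂ ℝ² of the form u(r,θ) = (A cos nθ + B sin nθ)·J_n(μ r) with eigenvalue E = μ², where μ is a positive zero of J_n'. Then 2E·‖u‖²_{L²(D)} = (E − n²)·‖u‖²_{L²(∂D)}. -/

import Mathlib

open MeasureTheory Real

private lemma radial_ident (n : ℕ) (μ : ℝ) (hμ : 0 < μ) (J : ℝ → ℝ)
    (hJ : ContDiff ℝ 2 J)
    (hODE : ∀ r : ℝ, r^2 * deriv (deriv J) r + r * deriv J r
      + (r^2 - (n:ℝ)^2) * J r = 0)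
    (hbc : deriv J μ = 0) :
    2 * μ^2 * (∫ r in (0:ℝ)..1, (J (μ * r))^2 * r)
      = (μ^2 - (n:ℝ)^2) * (J μ)^2 := by
  have hJd : Differentiable ℝ J := hJ.differentiable two_ne_zero
  have hJ'c : ContDiff ℝ 1 (deriv J) := (contDiff_succ_iff_deriv.mp (show ContDiff ℝ (1+1) J by norm_num; exact hJ)).2.2
  have hJ'd : Differentiable ℝ (deriv J) := hJ'c.differentiable one_ne_zero
  -- FTC: ∫ s in 0..μ, 2*s*(J s)^2 = F μ - F 0
  set F : ℝ → ℝ := fun s => s^2 * (deriv J s)^2 + (s^2 - (n:ℝ)^2) * (J s)^2 with hF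
  have hderiv : ∀ s ∈ Set.uIcc (0:ℝ) μ, HasDerivAt F (2 * s * (J s)^2) s := by
    intro s _
    have h1 : HasDerivAt J (deriv J s) s := (hJd s).hasDerivAt
    have h2 : HasDerivAt (deriv J) (deriv (deriv J) s) s := (hJ'd s).hasDerivAt
    have hs : HasDerivAt (fun x : ℝ => x^2) (2*s) s := by
      simpa using (hasDerivAt_pow 2 s)
    have hA : HasDerivAt (fun x => x^2 * (deriv J x)^2)
        (2*s * (deriv J s)^2 + s^2 * (2 * deriv J s * deriv (deriv J) s)) s := by
      exact hs.mul (by simpa [mul_comm, Function.comp_def] using ((hasDerivAt_pow 2 (deriv J s)).comp s h2))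
    have hB : HasDerivAt (fun x => (x^2 - (n:ℝ)^2) * (J x)^2)
        (2*s * (J s)^2 + (s^2 - (n:ℝ)^2) * (2 * J s * deriv J s)) s := by
      exact (hs.sub_const _).mul (by simpa [mul_comm, Function.comp_def] using ((hasDerivAt_pow 2 (J s)).comp s h1))
    have := hA.add hB
    refine this.congr_deriv ?_
    linear_combination (2 * deriv J s) * hODE s
  have hcont : IntervalIntegrable (fun s => 2 * s * (J s)^2) volume 0 μ := by
    exact Continuous.intervalIntegrable (by exact ((continuous_const.mul continuous_id).mul ((hJ.continuous).pow 2))) 0 μ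
  have hFTC : ∫ s in (0:ℝ)..μ, 2 * s * (J s)^2 = F μ - F 0 :=
    intervalIntegral.integral_eq_sub_of_hasDerivAt hderiv hcont
  have hJ0 : (n:ℝ)^2 * (J 0)^2 = 0 := by
    have h0 := hODE 0
    simp at h0
    rcases h0 with h0 | h0 <;> simp [h0]
  have hFval : F μ - F 0 = (μ^2 - (n:ℝ)^2) * (J μ)^2 := by
    simp only [hF, hbc]
    ring_nf
    nlinarith [hJ0]
  -- change of variables
  have hsub : ∫ r in (0:ℝ)..1, (J (μ * r))^2 * r
      = μ⁻¹ • ∫ s in (μ*0)..(μ*1), (J s)^2 * (s/μ) := by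
    have := intervalIntegral.integral_comp_mul_left (fun s => (J s)^2 * (s/μ)) hμ.ne'
      (a := 0) (b := 1)
    simp only [mul_div_assoc] at this ⊢
    rw [← this]
    congr 1
    ext r
    field_simp
  rw [hsub]
  rw [show ∫ s in (μ*0)..(μ*1), (J s)^2 * (s/μ)
      = μ⁻¹ * ∫ s in (0:ℝ)..μ, (J s)^2 * s by
    rw [mul_zero, mul_one, ← intervalIntegral.integral_const_mul]
    congr 1; ext s; field_simp]
  have h2 : ∫ s in (0:ℝ)..μ, (J s)^2 * s
      = (1/2) * ((μ^2 - (n:ℝ)^2) * (J μ)^2) := by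
    rw [← hFval, ← hFTC, ← intervalIntegral.integral_const_mul]
    congr 1; ext s; ring
  rw [h2]
  have hμ0 : μ ≠ 0 := hμ.ne'
  rw [smul_eq_mul]
  field_simp

/-- A Neumann eigenfunction `u(r,θ) = (A cos nθ + B sin nθ) Jₙ(μ r)` on the unit
disc, where `J` satisfies the Bessel equation of order `n` and `J'(μ) = 0`,
satisfies `2E‖u‖²_{L²(D)} = (E - n²)‖u‖²_{L²(∂D)}` with `E = μ²`, where the
`L²` norms are written out in polar coordinates. -/
theorem stmt6 (n : ℕ) (A B μ : ℝ) (hμ : 0 < μ) (J : ℝ → ℝ)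
    (hJ : ContDiff ℝ 2 J)
    (hODE : ∀ r : ℝ, r^2 * deriv (deriv J) r + r * deriv J r
      + (r^2 - (n:ℝ)^2) * J r = 0)
    (hbc : deriv J μ = 0) :
    2 * μ^2 * (∫ θ in (0:ℝ)..(2*π), ∫ r in (0:ℝ)..1,
        ((A * Real.cos (n * θ) + B * Real.sin (n * θ)) * J (μ * r))^2 * r)
    = (μ^2 - (n:ℝ)^2) * (∫ θ in (0:ℝ)..(2*π),
        ((A * Real.cos (n * θ) + B * Real.sin (n * θ)) * J (μ * 1))^2) := by
  have key := radial_ident n μ hμ J hJ hODE hbc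
  have hinner : ∀ θ : ℝ,
      (∫ r in (0:ℝ)..1, ((A * Real.cos (n * θ) + B * Real.sin (n * θ)) * J (μ * r))^2 * r)
      = (A * Real.cos (n * θ) + B * Real.sin (n * θ))^2
          * ∫ r in (0:ℝ)..1, (J (μ * r))^2 * r := by
    intro θ
    rw [← intervalIntegral.integral_const_mul]
    congr 1; ext r; ring
  simp only [hinner]
  rw [intervalIntegral.integral_mul_const]
  have houter : ∀ θ : ℝ,
      ((A * Real.cos (n * θ) + B * Real.sin (n * θ)) * J (μ * 1))^2
      = (A * Real.cos (n * θ) + B * Real.sin (n * θ))^2 * (J μ)^2 := by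
    intro θ; rw [mul_one]; ring
  simp only [houter]
  rw [intervalIntegral.integral_mul_const]
  linear_combination (∫ (x : ℝ) in (0:ℝ)..2 * π, (A * cos (↑n * x) + B * sin (↑n * x)) ^ 2) * key
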